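/- arXiv:1311.3981 — 4 statements merged into one kernel-verified Lean document; each statement's English description precedes it below -/
import Mathlib

section
/- Let X_1, X_2, … be mutually independent nonnegative random variables with E(X_i) = 1 for all i, Var(X_i) ≤ C for all i for some constant C < ∞, and suppose there exist δ > 0 and c > 0 such that P(X_i > 1 + δ) ≥ c for all i. For each m, let π̂0^(m) be the EBF estimate computed from X_1, …, X_m. Then π̂0^(m) converges to 1 in probability as m → ∞. (This is the paper's Lemma 2: when π0 = 1, i.e., all tests are null so all Bayes factors have null expectation 1 and finite variance, the EBF procedure estimates π̂0 →^P 1 as the number of tests grows.) -/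
open MeasureTheory ProbabilityTheory Filter

/-- Sum of the `d` smallest values among `b 1, …, b m` (the partial sum
`∑_{i=1}^{d} b_(i)` of the ascending order statistics). -/
noncomputable def sortedPartialSum {m : ℕ} (b : Fin m → ℝ) (d : ℕ) : ℝ :=
  ∑ i ∈ Finset.univ.filter (fun i : Fin m => (i : ℕ) < d), b (Tuple.sort b i)

/-- The stopping index `d₀` of the EBF procedure: the largest `d ∈ {0,…,m}` with
`∑_{i=1}^{d} b_(i) < d` (equal to `0` if no `d ≥ 1` satisfies this). -/
noncomputable def ebfD0 {m : ℕ} (b : Fin m → ℝ) : ℕ :=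
  sSup {d : ℕ | d ≤ m ∧ sortedPartialSum b d < d}

/-- The EBF estimate `π̂₀ = d₀ / m`. -/
noncomputable def ebfEstimate {m : ℕ} (b : Fin m → ℝ) : ℝ :=
  (ebfD0 b : ℝ) / m

lemma ebfD0_le {m : ℕ} (b : Fin m → ℝ) : ebfD0 b ≤ m := by
  rcases Set.eq_empty_or_nonempty {d : ℕ | d ≤ m ∧ sortedPartialSum b d < d} with h | h
  · rw [ebfD0, h, csSup_empty]; exact Nat.zero_le m
  · exact csSup_le h fun x hx => hx.1

lemma le_ebfD0 {m : ℕ} (b : Fin m → ℝ) {d : ℕ} (hd : d ≤ m)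
    (h : sortedPartialSum b d < d) : d ≤ ebfD0 b :=
  le_csSup ⟨m, fun x hx => hx.1⟩ ⟨hd, h⟩

lemma card_filter_val_lt (m d : ℕ) (hd : d ≤ m) :
    ((Finset.univ : Finset (Fin m)).filter fun i : Fin m => (i : ℕ) < d).card = d := by
  have h1 : ((Finset.range m).filter fun x => x < d) = Finset.range d := by
    ext x; simp only [Finset.mem_filter, Finset.mem_range]; omega
  rw [Finset.card_filter, Fin.sum_univ_eq_sum_range (fun i : ℕ => if i < d then 1 else 0),
    ← Finset.card_filter, h1, Finset.card_range]

lemma sortedPartialSum_le {m : ℕ} (b : Fin m → ℝ) {k : ℕ} (hk : k ≤ m) {t : ℝ}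
    (hcard : k ≤ ((Finset.univ : Finset (Fin m)).filter fun j => t < b j).card) :
    sortedPartialSum b (m - k) ≤ (∑ j, b j) - k * t := by
  classical
  set σ := Tuple.sort b with hσ
  have hmono : Monotone (b ∘ σ) := Tuple.monotone_sort b
  have hsplit : sortedPartialSum b (m - k)
      + ∑ i ∈ Finset.univ.filter (fun i : Fin m => ¬ ((i : ℕ) < m - k)), b (σ i)
      = ∑ j, b j := by
    rw [sortedPartialSum, Finset.sum_filter_add_sum_filter_not]
    exact Equiv.sum_comp σ b
  have hterm : ∀ i ∈ Finset.univ.filter (fun i : Fin m => ¬ ((i : ℕ) < m - k)),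
      t ≤ b (σ i) := by
    intro i hi
    simp only [Finset.mem_filter, Finset.mem_univ, true_and, not_lt] at hi
    by_contra hlt
    push_neg at hlt
    have hsub : (Finset.univ.filter fun i' : Fin m => t < b (σ i')) ⊆ Finset.Ioi i := by
      intro i' hi'
      simp only [Finset.mem_filter, Finset.mem_univ, true_and] at hi'
      simp only [Finset.mem_Ioi]
      by_contra hle
      push_neg at hle
      exact absurd (lt_of_lt_of_le hi' (hmono hle)) (not_lt.2 hlt.le)
    have hcard2 : ((Finset.univ : Finset (Fin m)).filter fun j => t < b j).card
        = (Finset.univ.filter fun i' : Fin m => t < b (σ i')).card := by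
      rw [Finset.card_filter, Finset.card_filter]
      exact (Equiv.sum_comp σ fun j => if t < b j then 1 else 0).symm
    have h3 := Finset.card_le_card hsub
    rw [← hcard2] at h3
    have hIoi : (Finset.Ioi i).card = m - 1 - (i : ℕ) := Fin.card_Ioi i
    have him : (i : ℕ) < m := i.isLt
    omega
  have hcardc : (Finset.univ.filter fun i : Fin m => ¬ ((i : ℕ) < m - k)).card = k := by
    have := Finset.card_filter_add_card_filter_not
      (s := (Finset.univ : Finset (Fin m))) (p := fun i : Fin m => (i : ℕ) < m - k)
    rw [card_filter_val_lt m (m - k) (Nat.sub_le m k)] at this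
    simp only [Finset.card_univ, Fintype.card_fin] at this
    omega
  have hbound : (k : ℝ) * t ≤
      ∑ i ∈ Finset.univ.filter (fun i : Fin m => ¬ ((i : ℕ) < m - k)), b (σ i) := by
    have := Finset.card_nsmul_le_sum _ _ _ hterm
    rw [hcardc, nsmul_eq_mul] at this
    exact this
  linarith

set_option maxHeartbeats 2000000

/-- **Lemma 2 (Wen, 2013).** When all tests are null (`π₀ = 1`): if `X₁, X₂, …` are
mutually independent nonnegative random variables with `E(Xᵢ) = 1`, variance bounded by
a common constant `C`, and `P(Xᵢ > 1 + δ) ≥ c > 0` for all `i`, then the EBF estimate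
`π̂₀⁽ᵐ⁾` computed from `X₁, …, X_m` converges to `1` in probability as `m → ∞`. -/
theorem ebf_estimate_tendsto_one_of_all_null
    {Ω : Type*} [MeasurableSpace Ω] (P : Measure Ω) [IsProbabilityMeasure P]
    (X : ℕ → Ω → ℝ) (C δ c : ℝ) (hδ : 0 < δ) (hc : 0 < c)
    (hmeas : ∀ i, Measurable (X i))
    (hnonneg : ∀ i ω, 0 ≤ X i ω)
    (hindep : iIndepFun X P)
    (hint : ∀ i, Integrable (X i) P)
    (hmean : ∀ i, ∫ ω, X i ω ∂P = 1)
    (hL2 : ∀ i, MemLp (X i) 2 P)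
    (hvar : ∀ i, variance (X i) P ≤ C)
    (htail : ∀ i, ENNReal.ofReal c ≤ P {ω | 1 + δ < X i ω}) :
    ∀ ε > (0:ℝ),
      Tendsto (fun m => P {ω | ε < |ebfEstimate (fun i : Fin m => X i ω) - 1|})
        atTop (nhds 0) := by
  classical
  intro ε hε
  -- indicator variables
  set g : ℝ → ℝ := fun x => if 1 + δ < x then 1 else 0 with hg_def
  have hgm : Measurable g := Measurable.ite measurableSet_Ioi measurable_const measurable_const
  set Y : ℕ → Ω → ℝ := fun i => g ∘ X i with hY_def
  have hYindep : iIndepFun Y P := hindep.comp _ (fun _ => hgm)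
  have hYmeas : ∀ i, Measurable (Y i) := fun i => hgm.comp (hmeas i)
  have hY2 : ∀ i, MemLp (Y i) 2 P := by
    intro i
    refine MemLp.of_bound (hYmeas i).aestronglyMeasurable 1 (Filter.Eventually.of_forall fun ω => ?_)
    simp only [Y, g, Function.comp_apply]
    split_ifs <;> simp
  set s : ℕ → Set Ω := fun i => {ω | 1 + δ < X i ω} with hs_def
  have hsmeas : ∀ i, MeasurableSet (s i) := fun i => (hmeas i) measurableSet_Ioi
  set p : ℕ → ℝ := fun i => (P (s i)).toReal with hp_def
  have hYind : ∀ i, Y i = (s i).indicator (fun _ => (1:ℝ)) := by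
    intro i; funext ω
    by_cases h : 1 + δ < X i ω <;> simp [Y, g, s, Set.indicator, h]
  have hEY : ∀ i, P[Y i] = p i := by
    intro i
    rw [hYind i, integral_indicator_const (1:ℝ) (hsmeas i)]
    simp [p, Measure.real]
  have hpc : ∀ i, c ≤ p i := fun i =>
    (ENNReal.ofReal_le_iff_le_toReal (measure_ne_top P _)).1 (htail i)
  have hp1 : ∀ i, p i ≤ 1 := by
    intro i
    have h := prob_le_one (μ := P) (s := s i)
    simpa using ENNReal.toReal_mono ENNReal.one_ne_top h
  have hYsq : ∀ i, (Y i) ^ 2 = Y i := by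
    intro i; funext ω
    simp only [Pi.pow_apply, Y, g, Function.comp_apply]
    split_ifs <;> norm_num
  have hvarY : ∀ i, variance (Y i) P ≤ 1 := by
    intro i
    rw [variance_eq_sub (hY2 i), hYsq i, hEY i]
    nlinarith [hpc i, hp1 i, hc]
  -- sums
  set F : ℕ → Ω → ℝ := fun m => ∑ i ∈ Finset.range m, X i with hF_def
  set N : ℕ → Ω → ℝ := fun m => ∑ i ∈ Finset.range m, Y i with hN_def
  have hF2 : ∀ m : ℕ, MemLp (F m) 2 P := fun m => memLp_finset_sum' _ (fun i _ => hL2 i)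
  have hN2 : ∀ m : ℕ, MemLp (N m) 2 P := fun m => memLp_finset_sum' _ (fun i _ => hY2 i)
  have hEF : ∀ m : ℕ, P[F m] = (m:ℝ) := by
    intro m
    have : P[F m] = ∑ i ∈ Finset.range m, ∫ ω, X i ω ∂P := by
      simp only [F, Finset.sum_apply]
      exact integral_finset_sum _ fun i _ => hint i
    rw [this]
    simp [hmean]
  have hEN : ∀ m : ℕ, P[N m] = ∑ i ∈ Finset.range m, p i := by
    intro m
    have : P[N m] = ∑ i ∈ Finset.range m, ∫ ω, Y i ω ∂P := by
      simp only [N, Finset.sum_apply]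
      exact integral_finset_sum _ fun i _ => (hY2 i).integrable one_le_two
    rw [this]
    exact Finset.sum_congr rfl fun i _ => hEY i
  have hENlb : ∀ m : ℕ, c * m ≤ P[N m] := by
    intro m
    rw [hEN m]
    calc c * m = ∑ _i ∈ Finset.range m, c := by simp [mul_comm]
    _ ≤ ∑ i ∈ Finset.range m, p i := Finset.sum_le_sum fun i _ => hpc i
  have hvarF : ∀ m : ℕ, variance (F m) P ≤ m * C := by
    intro m
    rw [hF_def, IndepFun.variance_sum (fun i _ => hL2 i)
      (fun i _ j _ hij => hindep.indepFun hij)]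
    calc ∑ i ∈ Finset.range m, variance (X i) P ≤ ∑ _i ∈ Finset.range m, C :=
        Finset.sum_le_sum fun i _ => hvar i
    _ = m * C := by simp [mul_comm]
  have hvarN : ∀ m : ℕ, variance (N m) P ≤ (m:ℝ) := by
    intro m
    rw [hN_def, IndepFun.variance_sum (fun i _ => hY2 i)
      (fun i _ j _ hij => hYindep.indepFun hij)]
    calc ∑ i ∈ Finset.range m, variance (Y i) P ≤ ∑ _i ∈ Finset.range m, (1:ℝ) :=
        Finset.sum_le_sum fun i _ => hvarY i
    _ = m := by simp
  have hC0 : 0 ≤ C := le_trans (variance_nonneg _ _) (hvar 0)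
  have hc1 : c ≤ 1 := le_trans (hpc 0) (hp1 0)
  -- the cutoff
  set α : ℝ := min (ε / 2) (c / 2) with hα_def
  have hα : 0 < α := lt_min (by linarith) (by linarith)
  have hαε : α ≤ ε / 2 := min_le_left _ _
  have hαc : α ≤ c / 2 := min_le_right _ _
  set k : ℕ → ℕ := fun m => ⌈α * m⌉₊ with hk_def
  have hk_ge : ∀ m : ℕ, α * m ≤ k m := fun m => Nat.le_ceil _
  have hk_le : ∀ m : ℕ, (k m : ℝ) ≤ α * m + 1 := fun m =>
    le_of_lt (Nat.ceil_lt_add_one (by positivity))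
  -- the bounding sequences
  set u : ℕ → ℝ := fun m => C / (α ^ 2 * δ ^ 2) / m with hu_def
  set v : ℕ → ℝ := fun m => 16 / c ^ 2 / m with hv_def
  have hu : Tendsto u atTop (nhds 0) := tendsto_const_div_atTop_nhds_zero_nat _
  have hv : Tendsto v atTop (nhds 0) := tendsto_const_div_atTop_nhds_zero_nat _
  have hg0 : Tendsto (fun m => ENNReal.ofReal (u m) + ENNReal.ofReal (v m)) atTop (nhds 0) := by
    have := (ENNReal.tendsto_ofReal hu).add (ENNReal.tendsto_ofReal hv)
    simpa using this
  refine tendsto_of_tendsto_of_tendsto_of_le_of_le' tendsto_const_nhds hg0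
    (Filter.Eventually.of_forall fun m => zero_le) ?_
  have hev1 : ∀ᶠ m : ℕ in atTop, max (2 / ε) (4 / c) ≤ (m : ℝ) :=
    tendsto_natCast_atTop_atTop.eventually_ge_atTop _
  filter_upwards [hev1, eventually_ge_atTop 2] with m hmR hm2
  have hm0 : (0:ℝ) < m := by
    have : (2:ℝ) ≤ m := by exact_mod_cast hm2
    linarith
  have hmε : 2 / ε ≤ (m:ℝ) := le_trans (le_max_left _ _) hmR
  have hmc : 4 / c ≤ (m:ℝ) := le_trans (le_max_right _ _) hmR
  have hεm : 1 ≤ ε / 2 * m := by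
    rw [div_le_iff₀ hε] at hmε
    nlinarith
  have hcm : 4 ≤ c * m := by
    rw [div_le_iff₀ hc] at hmc
    linarith
  have hkmR : (k m : ℝ) ≤ m := by
    have h1 := hk_le m
    have : α * m ≤ c / 2 * m := by nlinarith
    nlinarith
  have hkm : k m ≤ m := by exact_mod_cast hkmR
  have hk1 : 1 ≤ k m := Nat.one_le_iff_ne_zero.2 (by
    have : 0 < k m := Nat.ceil_pos.2 (by positivity)
    omega)
  have hkδpos : (0:ℝ) < (k m) * δ := by
    have : (1:ℝ) ≤ k m := by exact_mod_cast hk1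
    nlinarith
  set rN : ℝ := P[N m] - k m with hrN_def
  have hrNlb : c * m / 4 ≤ rN := by
    have h1 := hENlb m
    have h2 := hk_le m
    have h3 : α * m ≤ c / 2 * m := by nlinarith
    rw [hrN_def]
    nlinarith
  have hrNpos : (0:ℝ) < rN := by nlinarith
  -- Chebyshev bounds
  have chebF := meas_ge_le_variance_div_sq (μ := P) (hF2 m) hkδpos
  have chebN := meas_ge_le_variance_div_sq (μ := P) (hN2 m) hrNpos
  -- inclusion
  have hsub : {ω | ε < |ebfEstimate (fun i : Fin m => X i ω) - 1|}
      ⊆ {ω | (k m : ℝ) * δ ≤ |F m ω - P[F m]|} ∪ {ω | rN ≤ |N m ω - P[N m]|} := by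
    intro ω hω
    by_contra hnot
    rw [Set.mem_union] at hnot
    push_neg at hnot
    obtain ⟨hA, hB⟩ := hnot
    simp only [Set.mem_setOf_eq, not_le] at hA hB
    -- F m ω < m + k δ
    have hFub : F m ω < m + (k m) * δ := by
      rw [hEF m] at hA
      have := abs_lt.1 hA
      linarith [this.2]
    -- (k m : ℝ) < N m ω
    have hNlb : (k m : ℝ) < N m ω := by
      have := abs_lt.1 hB
      rw [hrN_def] at this
      linarith [this.1]
    set b : Fin m → ℝ := fun i : Fin m => X i ω with hb_def
    have hNcard : N m ω
        = (((Finset.univ : Finset (Fin m)).filter fun j : Fin m => 1 + δ < b j).card : ℝ) := by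
      have h1 : N m ω = ∑ i ∈ Finset.range m, (if 1 + δ < X i ω then (1:ℝ) else 0) := by
        simp [N, Y, g, Finset.sum_apply]
      have h2 : ∑ j : Fin m, (if 1 + δ < b j then (1:ℝ) else 0)
          = ∑ i ∈ Finset.range m, (if 1 + δ < X i ω then (1:ℝ) else 0) :=
        Fin.sum_univ_eq_sum_range (fun i => if 1 + δ < X i ω then (1:ℝ) else 0) m
      rw [h1, ← h2, Finset.card_filter]
      push_cast
      rfl
    have hcard : k m ≤ ((Finset.univ : Finset (Fin m)).filter fun j : Fin m => 1 + δ < b j).card := by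
      rw [hNcard] at hNlb
      exact_mod_cast hNlb.le
    have hsps := sortedPartialSum_le b hkm hcard
    have hsumb : ∑ j, b j = F m ω := by
      simp only [F, Finset.sum_apply]
      exact Fin.sum_univ_eq_sum_range (fun i => X i ω) m
    have hcast : ((m - k m : ℕ) : ℝ) = (m : ℝ) - k m := by
      push_cast [Nat.cast_sub hkm]; ring
    have hlt : sortedPartialSum b (m - k m) < ((m - k m : ℕ) : ℝ) := by
      rw [hcast]
      rw [hsumb] at hsps
      have hexp : (k m : ℝ) * (1 + δ) = k m + (k m : ℝ) * δ := by ring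
      linarith
    have hd1 : m - k m ≤ ebfD0 b := le_ebfD0 b (Nat.sub_le _ _) hlt
    have hd2 : ebfD0 b ≤ m := ebfD0_le b
    have hd1R : (m : ℝ) - k m ≤ (ebfD0 b : ℝ) := by
      rw [← hcast]; exact_mod_cast hd1
    have hd2R : (ebfD0 b : ℝ) ≤ m := by exact_mod_cast hd2
    have hkε : (k m : ℝ) ≤ ε * m := by
      have h1 := hk_le m
      have h2 : α * m ≤ ε / 2 * m := by nlinarith
      nlinarith
    have habs : |ebfEstimate b - 1| ≤ ε := by
      rw [ebfEstimate, abs_le]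
      constructor
      · have h1 : (1 - ε) * m ≤ (ebfD0 b : ℝ) := by nlinarith
        have h2 := (le_div_iff₀ hm0).2 h1
        linarith
      · have h2 := (div_le_one hm0).2 hd2R
        linarith
    simp only [Set.mem_setOf_eq] at hω
    rw [hb_def] at habs
    exact absurd hω (not_lt.2 habs)
  -- combine
  calc P {ω | ε < |ebfEstimate (fun i : Fin m => X i ω) - 1|}
      ≤ P ({ω | (k m : ℝ) * δ ≤ |F m ω - P[F m]|} ∪ {ω | rN ≤ |N m ω - P[N m]|}) :=
        measure_mono hsub
    _ ≤ P {ω | (k m : ℝ) * δ ≤ |F m ω - P[F m]|} + P {ω | rN ≤ |N m ω - P[N m]|} :=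
        measure_union_le _ _
    _ ≤ ENNReal.ofReal (variance (F m) P / ((k m : ℝ) * δ) ^ 2)
        + ENNReal.ofReal (variance (N m) P / rN ^ 2) := add_le_add chebF chebN
    _ ≤ ENNReal.ofReal (u m) + ENNReal.ofReal (v m) := by
        refine add_le_add (ENNReal.ofReal_le_ofReal ?_) (ENNReal.ofReal_le_ofReal ?_)
        · calc variance (F m) P / ((k m : ℝ) * δ) ^ 2
              ≤ (m * C) / (α * m * δ) ^ 2 := by
                apply div_le_div₀ (by positivity) (hvarF m) (by positivity)
                have h1 : α * m ≤ (k m : ℝ) := hk_ge m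
                exact pow_le_pow_left₀ (by positivity) (by nlinarith) 2
          _ = u m := by
                rw [hu_def]
                field_simp
        · calc variance (N m) P / rN ^ 2
              ≤ (m : ℝ) / (c * m / 4) ^ 2 := by
                apply div_le_div₀ (by positivity) (hvarN m) (by positivity) (by nlinarith [hrNlb])
          _ = v m := by
                rw [hv_def]
                field_simp
                ring
end

section
/- Fix π0 ∈ [0,1], a constant C < ∞, and δ > 0, c > 0. For each m, let X_{m,1}, …, X_{m,m} be mutually independent nonnegative random variables and let N_m ⊆ {1, …, m} be a (null) index set with |N_m| ≥ π0·m, such that for every i ∈ N_m: E(X_{m,i}) = 1, Var(X_{m,i}) ≤ C, and P(X_{m,i} > 1 + δ) ≥ c; the variables with indices outside N_m are arbitrary nonnegative random variables (independent of the rest). Let π̂0^(m) be the EBF estimate computed from X_{m,1}, …, X_{m,m}. Then for every ε > 0, P(π̂0^(m) ≥ π0 − ε) → 1 as m → ∞. (This is the paper's Proposition 1: for a mixture of null and alternative models, the EBF estimate is an asymptotic upper bound for the true null proportion π0, provided the number of null tests is sufficiently large.) -/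
open MeasureTheory ProbabilityTheory Filter
open scoped ENNReal NNReal

lemma fin_le_strictMono {d m : ℕ} {f : Fin d → Fin m} (hf : StrictMono f) :
    ∀ n (h : n < d), n ≤ (f ⟨n, h⟩ : ℕ) := by
  intro n
  induction n with
  | zero => intro h; exact Nat.zero_le _
  | succ k ih =>
    intro h
    have hk : k < d := Nat.lt_of_succ_lt h
    have h1 : f ⟨k, hk⟩ < f ⟨k + 1, h⟩ := hf (by simp [Fin.lt_def])
    have h2 := ih hk
    have h3 : (f ⟨k, hk⟩ : ℕ) < (f ⟨k + 1, h⟩ : ℕ) := h1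
    omega

lemma sum_filter_lt_le_sum {m : ℕ} {g : Fin m → ℝ} (hg : Monotone g)
    (S : Finset (Fin m)) :
    ∑ i ∈ Finset.univ.filter (fun i : Fin m => (i : ℕ) < S.card), g i ≤ ∑ i ∈ S, g i := by
  have hdm : S.card ≤ m := by simpa using S.card_le_univ
  have e : Fin S.card ↪o Fin m := S.orderEmbOfFin rfl
  have hfilter : Finset.univ.filter (fun i : Fin m => (i : ℕ) < S.card)
      = Finset.univ.map (Fin.castLEEmb hdm) := by
    ext i
    simp only [Finset.mem_filter, Finset.mem_univ, true_and, Finset.mem_map,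
      Fin.castLEEmb, Function.Embedding.coeFn_mk]
    constructor
    · intro hi; exact ⟨⟨(i : ℕ), hi⟩, by simp [Fin.ext_iff]⟩
    · rintro ⟨j, rfl⟩; simpa using j.isLt
  have himage : Finset.univ.image (fun j : Fin S.card => S.orderEmbOfFin rfl j) = S := by
    ext i
    simp only [Finset.mem_image, Finset.mem_univ, true_and]
    constructor
    · rintro ⟨j, rfl⟩; exact S.orderEmbOfFin_mem rfl j
    · intro hi
      have h2 : i ∈ Set.range (S.orderEmbOfFin rfl) := by
        rw [Finset.range_orderEmbOfFin]; exact Finset.mem_coe.2 hi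
      obtain ⟨j, hj⟩ := h2; exact ⟨j, hj⟩
  have hS : ∑ i ∈ S, g i = ∑ j : Fin S.card, g (S.orderEmbOfFin rfl j) := by
    conv_lhs => rw [← himage]
    rw [Finset.sum_image (fun x _ y _ h => (S.orderEmbOfFin rfl).injective h)]
  rw [hS, hfilter, Finset.sum_map]
  apply Finset.sum_le_sum
  intro j _
  apply hg
  rw [Fin.le_def]
  exact fin_le_strictMono (S.orderEmbOfFin rfl).strictMono j j.isLt

lemma sortedPartialSum_le_sum {m : ℕ} (b : Fin m → ℝ) (S : Finset (Fin m)) :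
    sortedPartialSum b S.card ≤ ∑ i ∈ S, b i := by
  classical
  set σ := Tuple.sort b with hσ
  have hmono : Monotone (b ∘ σ) := Tuple.monotone_sort b
  have himg : ∑ j ∈ S.image σ.symm, (b ∘ σ) j = ∑ i ∈ S, b i := by
    rw [Finset.sum_image (by intro x _ y _ h; exact σ.symm.injective h)]
    simp
  have hcard : (S.image σ.symm).card = S.card :=
    Finset.card_image_of_injective _ σ.symm.injective
  have := sum_filter_lt_le_sum hmono (S.image σ.symm)
  rw [himg, hcard] at this
  exact this

lemma key_le_ebfD0 {m : ℕ} (b : Fin m → ℝ) (Nf : Finset (Fin m)) (k : ℕ) {δ : ℝ}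
    (hδ : 0 < δ) (hk1 : 1 ≤ k)
    (hk : k ≤ (Nf.filter (fun i => 1 + δ < b i)).card)
    (hA : ∑ i ∈ Nf, b i < (Nf.card : ℝ) + δ * k) :
    Nf.card - k ≤ ebfD0 b := by
  classical
  obtain ⟨T, hTF, hTcard⟩ := Finset.exists_subset_card_eq hk
  have hTN : T ⊆ Nf := hTF.trans (Finset.filter_subset _ _)
  have hkN : k ≤ Nf.card := hTcard ▸ Finset.card_le_card hTN
  have hTne : T.Nonempty := Finset.card_pos.1 (by omega)
  have hsumT : (k : ℝ) * (1 + δ) < ∑ i ∈ T, b i := by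
    have h := Finset.sum_lt_sum_of_nonempty hTne
      (f := fun _ => (1 + δ)) (fun i hi => (Finset.mem_filter.1 (hTF hi)).2)
    have h' : (k : ℝ) + (k : ℝ) * δ < ∑ i ∈ T, b i := by
      simpa [Finset.sum_const, hTcard, nsmul_eq_mul, mul_add] using h
    linarith
  have hd : (Nf \ T).card = Nf.card - k := by rw [Finset.card_sdiff_of_subset hTN, hTcard]
  have hsum : ∑ i ∈ Nf \ T, b i = ∑ i ∈ Nf, b i - ∑ i ∈ T, b i := by
    have := Finset.sum_sdiff (f := b) hTN
    linarith
  have hdcast : ((Nf \ T).card : ℝ) = (Nf.card : ℝ) - k := by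
    rw [hd]; push_cast [Nat.cast_sub hkN]; ring
  have hlt : sortedPartialSum b (Nf \ T).card < ((Nf \ T).card : ℝ) := by
    calc sortedPartialSum b (Nf \ T).card ≤ ∑ i ∈ Nf \ T, b i :=
          sortedPartialSum_le_sum b _
    _ = ∑ i ∈ Nf, b i - ∑ i ∈ T, b i := hsum
    _ < ((Nf.card : ℝ) + δ * k) - (k : ℝ) * (1 + δ) := by linarith
    _ = (Nf.card : ℝ) - k := by ring
    _ = ((Nf \ T).card : ℝ) := hdcast.symm
  have hmem : (Nf \ T).card ∈ {d : ℕ | d ≤ m ∧ sortedPartialSum b d < d} :=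
    ⟨le_trans (Finset.card_le_univ _) (by simp), hlt⟩
  have hbdd : BddAbove {d : ℕ | d ≤ m ∧ sortedPartialSum b d < d} :=
    ⟨m, fun x hx => hx.1⟩
  have := le_csSup hbdd hmem
  rwa [hd] at this

set_option maxHeartbeats 2000000

/-- **Proposition 1 (Wen, 2013).** For a mixture of null and alternative tests: if for
each `m` the Bayes factors `X_{m,1}, …, X_{m,m}` are mutually independent nonnegative
random variables and the null index set `N_m` has `|N_m| ≥ π₀·m`, where for `i ∈ N_m`
one has `E(X_{m,i}) = 1`, `Var(X_{m,i}) ≤ C`, and `P(X_{m,i} > 1 + δ) ≥ c`, then the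
EBF estimate is an asymptotic upper bound for `π₀`:
`P(π̂₀⁽ᵐ⁾ ≥ π₀ − ε) → 1` for every `ε > 0`. -/
theorem ebf_estimate_asymptotic_upper_bound
    {Ω : Type*} [MeasurableSpace Ω] (P : Measure Ω) [IsProbabilityMeasure P]
    (π₀ : ℝ) (hπ₀0 : 0 ≤ π₀) (hπ₀1 : π₀ ≤ 1)
    (C δ c : ℝ) (hδ : 0 < δ) (hc : 0 < c)
    (X : (m : ℕ) → Fin m → Ω → ℝ) (N : (m : ℕ) → Finset (Fin m))
    (hN : ∀ m, π₀ * m ≤ ((N m).card : ℝ))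
    (hmeas : ∀ m i, Measurable (X m i))
    (hnonneg : ∀ m i ω, 0 ≤ X m i ω)
    (hindep : ∀ m, iIndepFun (X m) P)
    (hint : ∀ m, ∀ i ∈ N m, Integrable (X m i) P)
    (hmean : ∀ m, ∀ i ∈ N m, ∫ ω, X m i ω ∂P = 1)
    (hL2 : ∀ m, ∀ i ∈ N m, MemLp (X m i) 2 P)
    (hvar : ∀ m, ∀ i ∈ N m, variance (X m i) P ≤ C)
    (htail : ∀ m, ∀ i ∈ N m, ENNReal.ofReal c ≤ P {ω | 1 + δ < X m i ω}) :
    ∀ ε > (0:ℝ),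
      Tendsto (fun m => P {ω | π₀ - ε ≤ ebfEstimate (fun i : Fin m => X m i ω)})
        atTop (nhds 1) := by
  classical
  intro ε hε
  by_cases hcase : π₀ ≤ ε
  · have hall : ∀ m : ℕ, P {ω | π₀ - ε ≤ ebfEstimate (fun i : Fin m => X m i ω)} = 1 := by
      intro m
      have : {ω | π₀ - ε ≤ ebfEstimate (fun i : Fin m => X m i ω)} = Set.univ := by
        ext ω
        simp only [Set.mem_setOf_eq, Set.mem_univ, iff_true]
        have h0 : (0:ℝ) ≤ ebfEstimate (fun i : Fin m => X m i ω) :=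
          div_nonneg (Nat.cast_nonneg _) (Nat.cast_nonneg _)
        linarith
      rw [this, measure_univ]
    simp only [hall]
    exact tendsto_const_nhds
  push_neg at hcase
  have hπ : 0 < π₀ := hε.trans hcase
  set η : ℝ := min (ε / 2) (c * π₀ / 4) with hη_def
  have hη : 0 < η := lt_min (by linarith) (by positivity)
  have hηε : η ≤ ε / 2 := min_le_left _ _
  have hηc : η ≤ c * π₀ / 4 := min_le_right _ _
  -- the indicator function
  set φ : ℝ → ℝ := (Set.Ioi (1 + δ)).indicator (fun _ => (1:ℝ)) with hφ_def
  have hφmeas : Measurable φ := measurable_const.indicator measurableSet_Ioi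
  have hφ_eq : ∀ x, φ x = if 1 + δ < x then 1 else 0 := by
    intro x; simp [hφ_def, Set.indicator_apply, Set.mem_Ioi]
  have hφ_bd : ∀ x, 0 ≤ φ x ∧ φ x ≤ 1 := by
    intro x; rw [hφ_eq]; split <;> norm_num
  -- constants
  set K1 : ℝ := max C 0 / (δ * η) ^ 2 with hK1_def
  set K2 : ℝ := 4 / (c * π₀) ^ 2 with hK2_def
  set K : ℝ := K1 + K2 with hK_def
  -- eventual bound
  have hev : ∀ᶠ m : ℕ in atTop,
      (max (max (1/η) (2/ε)) (4/(c*π₀))) ≤ (m:ℝ) :=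
    tendsto_natCast_atTop_atTop.eventually_ge_atTop _
  have main : ∀ᶠ m : ℕ in atTop,
      1 - ENNReal.ofReal (K / m) ≤
        P {ω | π₀ - ε ≤ ebfEstimate (fun i : Fin m => X m i ω)} := by
    filter_upwards [hev] with m hm
    have hm1 : 1 ≤ η * m := by
      have h := le_trans (le_max_left _ _) (le_trans (le_max_left _ _) hm)
      rw [div_le_iff₀ hη] at h; linarith [h]
    have hm2 : 2 ≤ ε * m := by
      have h := le_trans (le_max_right _ _) (le_trans (le_max_left _ _) hm)
      rw [div_le_iff₀ hε] at h; linarith [h]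
    have hm3 : 4 ≤ c * π₀ * m := by
      have h := le_trans (le_max_right _ _) hm
      rw [div_le_iff₀ (by positivity : (0:ℝ) < c * π₀)] at h; linarith [h]
    have hmpos : (0:ℝ) < m := by nlinarith
    have hmnat : 0 < m := by exact_mod_cast hmpos
    -- N m is nonempty, C ≥ 0
    have hNcard : (0:ℝ) < ((N m).card : ℝ) :=
      lt_of_lt_of_le (by nlinarith) (hN m)
    have hNne : (N m).Nonempty := by
      rw [← Finset.card_pos]; exact_mod_cast hNcard
    have hC0 : 0 ≤ C := le_trans (variance_nonneg _ _) (hvar m hNne.choose hNne.choose_spec)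
    have hcard_le : ((N m).card : ℝ) ≤ (m:ℝ) := by
      exact_mod_cast (by simpa using (N m).card_le_univ : (N m).card ≤ m)
    -- the sum S and the count Z
    set S : Ω → ℝ := ∑ i ∈ N m, X m i with hS_def
    set Y : Fin m → Ω → ℝ := fun i => φ ∘ X m i with hY_def
    set Z : Ω → ℝ := ∑ i ∈ N m, Y i with hZ_def
    have hYmeas : ∀ i, Measurable (Y i) := fun i => hφmeas.comp (hmeas m i)
    have hYmem : ∀ i, MemLp (Y i) 2 P := by
      intro i
      refine MemLp.of_bound ((hYmeas i).aestronglyMeasurable) 1 (ae_of_all _ fun ω => ?_)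
      have hYval : Y i ω = φ (X m i ω) := rfl
      rw [Real.norm_eq_abs, abs_le, hYval]
      constructor
      · linarith [(hφ_bd (X m i ω)).1]
      · exact (hφ_bd (X m i ω)).2
    have hYint : ∀ i, Integrable (Y i) P := fun i => (hYmem i).integrable one_le_two
    -- mean of S
    have hSmean : ∫ ω, S ω ∂P = ((N m).card : ℝ) := by
      have h1 : ∫ ω, S ω ∂P = ∑ i ∈ N m, ∫ ω, X m i ω ∂P := by
        simp only [hS_def, Finset.sum_apply]
        exact integral_finset_sum _ (fun i hi => hint m i hi)
      rw [h1, Finset.sum_congr rfl (fun i hi => hmean m i hi), Finset.sum_const,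
        nsmul_eq_mul, mul_one]
    have hSmem : MemLp S 2 P := memLp_finset_sum' _ (hL2 m)
    have hSvar : variance S P ≤ max C 0 * m := by
      have h1 : variance S P = ∑ i ∈ N m, variance (X m i) P :=
        IndepFun.variance_sum (hL2 m) (fun i _ j _ hij => (hindep m).indepFun hij)
      have h2 : ∑ i ∈ N m, variance (X m i) P ≤ ∑ i ∈ N m, C :=
        Finset.sum_le_sum (fun i hi => hvar m i hi)
      rw [h1]
      calc ∑ i ∈ N m, variance (X m i) P ≤ ((N m).card : ℝ) * C := by
            rw [← nsmul_eq_mul, ← Finset.sum_const]; exact h2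
      _ ≤ max C 0 * m := by
          have : C ≤ max C 0 := le_max_left _ _
          nlinarith [le_max_right C 0]
    -- mean of each Y
    have hYmean : ∀ i ∈ N m, c ≤ ∫ ω, Y i ω ∂P := by
      intro i hi
      have hpre : Y i = (X m i ⁻¹' Set.Ioi (1 + δ)).indicator (fun _ => (1:ℝ)) := by
        funext ω
        simp [hY_def, hφ_def, Set.indicator_apply, Set.mem_preimage]
      have hmeas_pre : MeasurableSet (X m i ⁻¹' Set.Ioi (1 + δ)) :=
        (hmeas m i) measurableSet_Ioi
      have : ∫ ω, Y i ω ∂P = (P (X m i ⁻¹' Set.Ioi (1 + δ))).toReal := by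
        rw [hpre]
        rw [integral_indicator_const (1:ℝ) hmeas_pre]
        simp [Measure.real_def]
      rw [this]
      have hset : {ω | 1 + δ < X m i ω} = X m i ⁻¹' Set.Ioi (1 + δ) := rfl
      have h := htail m i hi
      rw [hset] at h
      exact (ENNReal.ofReal_le_iff_le_toReal (measure_ne_top _ _)).1 h
    -- variance of each Y
    have hYvar : ∀ i, variance (Y i) P ≤ 1 := by
      intro i
      rw [variance_eq_sub (hYmem i)]
      have h1 : ∫ ω, (Y i ω) ^ 2 ∂P ≤ 1 := by
        have hle : ∀ ω, (Y i ω) ^ 2 ≤ 1 := by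
          intro ω
          have := hφ_bd (X m i ω)
          have : (Y i ω) = φ (X m i ω) := rfl
          nlinarith [(hφ_bd (X m i ω)).1, (hφ_bd (X m i ω)).2]
        calc ∫ ω, (Y i ω) ^ 2 ∂P ≤ ∫ _ω, (1:ℝ) ∂P :=
              integral_mono (hYmem i).integrable_sq (integrable_const 1) hle
        _ = 1 := by simp
      have h2 : (0:ℝ) ≤ (∫ ω, Y i ω ∂P) ^ 2 := sq_nonneg _
      simp only [Pi.pow_apply] at h1 ⊢
      linarith
    -- mean and variance of Z
    have hZmean : c * π₀ * m ≤ ∫ ω, Z ω ∂P := by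
      have h1 : ∫ ω, Z ω ∂P = ∑ i ∈ N m, ∫ ω, Y i ω ∂P := by
        simp only [hZ_def, Finset.sum_apply]
        exact integral_finset_sum _ (fun i hi => hYint i)
      rw [h1]
      calc c * π₀ * m ≤ c * ((N m).card : ℝ) := by nlinarith [hN m]
      _ = ∑ _i ∈ N m, c := by rw [Finset.sum_const, nsmul_eq_mul]; ring
      _ ≤ ∑ i ∈ N m, ∫ ω, Y i ω ∂P := Finset.sum_le_sum (fun i hi => hYmean i hi)
    have hZmem : MemLp Z 2 P := memLp_finset_sum' _ (fun i _ => hYmem i)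
    have hZvar : variance Z P ≤ (m:ℝ) := by
      have h1 : variance Z P = ∑ i ∈ N m, variance (Y i) P :=
        IndepFun.variance_sum (fun i _ => hYmem i)
          (fun i _ j _ hij => ((hindep m).comp (fun _ => φ) (fun _ => hφmeas)).indepFun hij)
      rw [h1]
      calc ∑ i ∈ N m, variance (Y i) P ≤ ∑ _i ∈ N m, (1:ℝ) :=
            Finset.sum_le_sum (fun i _ => hYvar i)
      _ = ((N m).card : ℝ) := by rw [Finset.sum_const, nsmul_eq_mul, mul_one]
      _ ≤ (m:ℝ) := hcard_le
    -- Chebyshev bounds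
    have htA : (0:ℝ) < δ * η * m := by positivity
    have hPA : P {ω | δ * η * m ≤ |S ω - P[S]|} ≤ ENNReal.ofReal (K1 / m) := by
      refine le_trans (meas_ge_le_variance_div_sq hSmem htA) (ENNReal.ofReal_le_ofReal ?_)
      rw [div_le_div_iff₀ (by positivity) hmpos]
      have hKid : K1 * (δ * η * m) ^ 2 = max C 0 * m ^ 2 := by
        rw [hK1_def]; field_simp
      nlinarith [hSvar, hmpos]
    have htB : (0:ℝ) < c * π₀ * m / 2 := by positivity
    have hPB : P {ω | c * π₀ * m / 2 ≤ |Z ω - P[Z]|} ≤ ENNReal.ofReal (K2 / m) := by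
      refine le_trans (meas_ge_le_variance_div_sq hZmem htB) (ENNReal.ofReal_le_ofReal ?_)
      rw [div_le_div_iff₀ (by positivity) hmpos]
      have hKid : K2 * (c * π₀ * m / 2) ^ 2 = m ^ 2 := by
        rw [hK2_def]; field_simp; ring
      nlinarith [hZvar, hmpos]
    -- good event inclusion
    set km : ℕ := ⌈η * m⌉₊ with hkm_def
    have hkm_ge : η * m ≤ (km : ℝ) := Nat.le_ceil _
    have hkm_le : (km : ℝ) ≤ η * m + 1 := (Nat.ceil_lt_add_one (by positivity)).le
    have hkm1 : 1 ≤ km := Nat.one_le_ceil_iff.2 (by nlinarith)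
    have hincl : {ω | δ * η * m ≤ |S ω - P[S]|}ᶜ ∩ {ω | c * π₀ * m / 2 ≤ |Z ω - P[Z]|}ᶜ ⊆
        {ω | π₀ - ε ≤ ebfEstimate (fun i : Fin m => X m i ω)} := by
      rintro ω ⟨hA, hB⟩
      simp only [Set.mem_compl_iff, Set.mem_setOf_eq, not_le] at hA hB
      have hPS : P[S] = ((N m).card : ℝ) := hSmean
      rw [hPS] at hA
      -- count of exceedances
      have hZcard : Z ω = (((N m).filter fun i => 1 + δ < X m i ω).card : ℝ) := by
        have h1 : Z ω = ∑ i ∈ N m, φ (X m i ω) := by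
          simp [hZ_def, hY_def, Finset.sum_apply]
        rw [h1]
        simp only [hφ_eq]
        rw [Finset.sum_boole]
      have hZlarge : (km : ℝ) ≤ Z ω := by
        have h1 : c * π₀ * m ≤ P[Z] := hZmean
        have h2 : η * m + 1 ≤ c * π₀ * m / 2 := by nlinarith
        have h3 : |Z ω - P[Z]| < c * π₀ * m / 2 := hB
        have h4 : P[Z] - Z ω < c * π₀ * m / 2 := by
          cases abs_lt.1 h3 with
          | intro hl hr => linarith
        linarith
      have hkcount : km ≤ ((N m).filter fun i => 1 + δ < X m i ω).card := by
        rw [hZcard] at hZlarge; exact_mod_cast hZlarge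
      have hSω : S ω = ∑ i ∈ N m, X m i ω := by simp [hS_def, Finset.sum_apply]
      have hAω : ∑ i ∈ N m, X m i ω < ((N m).card : ℝ) + δ * km := by
        have h4 : S ω - ((N m).card : ℝ) < δ * η * m := by
          cases abs_lt.1 hA with
          | intro hl hr => linarith
        have h5 : δ * η * m ≤ δ * km := by nlinarith
        rw [hSω] at h4; linarith
      have hkey := key_le_ebfD0 (fun i : Fin m => X m i ω) (N m) km hδ hkm1 hkcount hAω
      -- conclude
      have hkN : km ≤ (N m).card :=
        le_trans hkcount (Finset.card_le_card (Finset.filter_subset _ _))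
      have hd0 : ((N m).card : ℝ) - km ≤ (ebfD0 (fun i : Fin m => X m i ω) : ℝ) := by
        have := hkey
        have h6 : (((N m).card - km : ℕ) : ℝ) = ((N m).card : ℝ) - km := by
          push_cast [Nat.cast_sub hkN]; ring
        calc ((N m).card : ℝ) - km = (((N m).card - km : ℕ) : ℝ) := h6.symm
        _ ≤ _ := by exact_mod_cast hkey
      show π₀ - ε ≤ ebfEstimate (fun i : Fin m => X m i ω)
      rw [ebfEstimate, le_div_iff₀ hmpos]
      have h7 : π₀ * m ≤ ((N m).card : ℝ) := hN m
      have h8 : (km : ℝ) ≤ ε * m / 2 + 1 := by nlinarith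
      nlinarith [hd0]
    -- assemble the probability bound
    set EA := {ω | δ * η * m ≤ |S ω - P[S]|} with hEA_def
    set EB := {ω | c * π₀ * m / 2 ≤ |Z ω - P[Z]|} with hEB_def
    have hsub : (EA ∪ EB)ᶜ ⊆ {ω | π₀ - ε ≤ ebfEstimate (fun i : Fin m => X m i ω)} := by
      rw [Set.compl_union]; exact hincl
    have h1le : (1:ℝ≥0∞) ≤ P ((EA ∪ EB)ᶜ) + P (EA ∪ EB) := by
      have := measure_union_le (μ := P) (EA ∪ EB)ᶜ (EA ∪ EB)
      rwa [Set.compl_union_self, measure_univ] at this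
    have hPU : P (EA ∪ EB) ≤ ENNReal.ofReal (K / m) := by
      calc P (EA ∪ EB) ≤ P EA + P EB := measure_union_le _ _
      _ ≤ ENNReal.ofReal (K1 / m) + ENNReal.ofReal (K2 / m) := add_le_add hPA hPB
      _ = ENNReal.ofReal (K / m) := by
          rw [← ENNReal.ofReal_add (by positivity) (by positivity), hK_def,
            add_div]
    calc (1:ℝ≥0∞) - ENNReal.ofReal (K / m) ≤ 1 - P (EA ∪ EB) :=
          tsub_le_tsub_left hPU 1
    _ ≤ P ((EA ∪ EB)ᶜ) := by
        rw [tsub_le_iff_right]; exact h1le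
    _ ≤ _ := measure_mono hsub
  -- final limit argument
  have hlim0 : Tendsto (fun m : ℕ => ENNReal.ofReal (K / m)) atTop (nhds 0) := by
    have h1 := tendsto_const_div_atTop_nhds_zero_nat K
    have h2 := (ENNReal.continuous_ofReal.tendsto 0).comp h1
    simpa [Function.comp_def] using h2
  have hlo : Tendsto (fun m : ℕ => 1 - ENNReal.ofReal (K / m)) atTop (nhds 1) := by
    have := ENNReal.Tendsto.sub (tendsto_const_nhds (x := (1:ℝ≥0∞)) (f := atTop)) hlim0
      (Or.inl ENNReal.one_ne_top)
    simpa using this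
  refine tendsto_of_tendsto_of_tendsto_of_le_of_le' hlo tendsto_const_nhds main ?_
  exact Eventually.of_forall (fun m => prob_le_one)
end

section
/- Let m ≥ 1 be an integer, let b_1, …, b_m be nonnegative real numbers, let 0 < α ≤ 1, and let π̂0 be the EBF estimate computed from b_1, …, b_m. If b_j ≥ m/α for some index j, then (i) π̂0 ≤ 1 − 1/m, and (ii) the plug-in posterior null probability satisfies π̂0/(π̂0 + (1−π̂0)·b_j) ≤ ((m−1)/(m + (m−1)α))·α < α. (This is the paper's Corollary 1: at FDR level α, if a Bayes factor exceeds the automatic rejection threshold m/α, the EBF procedure automatically rejects the corresponding null hypothesis.) -/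
/-- **Corollary 1 (Wen, 2013): automatic rejection threshold.** At FDR level `α`, if a
Bayes factor `b j` exceeds `m/α`, then the EBF estimate satisfies `π̂₀ ≤ 1 − 1/m`, and
the plug-in posterior null probability of test `j` satisfies
`π̂₀/(π̂₀ + (1−π̂₀) b_j) ≤ ((m−1)/(m + (m−1)α))·α < α`, so the EBF procedure
automatically rejects the corresponding null hypothesis. -/
theorem ebf_automatic_rejection
    (m : ℕ) (hm : 1 ≤ m) (b : Fin m → ℝ) (hb : ∀ i, 0 ≤ b i)
    (α : ℝ) (hα0 : 0 < α) (hα1 : α ≤ 1)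
    (j : Fin m) (hj : (m : ℝ) / α ≤ b j) :
    ebfEstimate b ≤ 1 - 1 / m ∧
      ebfEstimate b / (ebfEstimate b + (1 - ebfEstimate b) * b j) ≤
        (((m : ℝ) - 1) / (m + ((m : ℝ) - 1) * α)) * α ∧
      (((m : ℝ) - 1) / (m + ((m : ℝ) - 1) * α)) * α < α := by
  have hm0 : (0 : ℝ) < m := by exact_mod_cast hm
  have hm1 : (1 : ℝ) ≤ m := by exact_mod_cast hm
  have hBα : (m : ℝ) ≤ b j * α := (div_le_iff₀ hα0).mp hj
  have hmα : (m : ℝ) ≤ (m : ℝ) / α := by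
    rw [le_div_iff₀ hα0]; nlinarith
  have hBpos : 0 < b j := lt_of_lt_of_le (by positivity) hj
  -- d₀ ≤ m - 1
  have hd0 : ebfD0 b ≤ m - 1 := by
    have hkey : ∀ d ∈ {d : ℕ | d ≤ m ∧ sortedPartialSum b d < d}, d ≤ m - 1 := by
      rintro d ⟨hdm, hds⟩
      by_contra h
      push_neg at h
      have hdm' : d = m := by omega
      have hsps : sortedPartialSum b m = ∑ i, b i := by
        unfold sortedPartialSum
        rw [Finset.filter_true_of_mem (fun i _ => i.isLt)]
        exact Equiv.sum_comp (Tuple.sort b) b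
      have hsum : (m : ℝ) ≤ ∑ i, b i :=
        le_trans (le_trans hmα hj)
          (Finset.single_le_sum (fun i _ => hb i) (Finset.mem_univ j))
      rw [hdm', hsps] at hds
      exact absurd hds (not_lt.2 hsum)
    rcases Set.eq_empty_or_nonempty {d : ℕ | d ≤ m ∧ sortedPartialSum b d < d} with he | hne
    · unfold ebfD0; rw [he]; simp
    · exact csSup_le hne hkey
  have hd0r : (ebfD0 b : ℝ) ≤ (m : ℝ) - 1 := by
    have : ((ebfD0 b : ℕ) : ℝ) ≤ ((m - 1 : ℕ) : ℝ) := Nat.cast_le.2 hd0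
    rwa [Nat.cast_sub hm, Nat.cast_one] at this
  set p := ebfEstimate b with hp
  have hp0 : 0 ≤ p := by rw [hp]; unfold ebfEstimate; positivity
  have hpm' : p * m ≤ (m : ℝ) - 1 := by
    rw [hp]; unfold ebfEstimate
    rw [div_mul_cancel₀ _ (ne_of_gt hm0)]
    exact hd0r
  have hpm : p ≤ 1 - 1 / m := by
    have h : (1 : ℝ) - 1 / m = ((m : ℝ) - 1) / m := by field_simp
    rw [h, le_div_iff₀ hm0]
    exact hpm'
  refine ⟨hpm, ?_, ?_⟩
  · have h1p : 1 / (m : ℝ) ≤ 1 - p := by linarith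
    have h1ppos : 0 < 1 - p := lt_of_lt_of_le (by positivity) h1p
    have hDpos : 0 < p + (1 - p) * b j := by nlinarith
    have hdenpos : 0 < (m : ℝ) + ((m : ℝ) - 1) * α := by nlinarith
    rw [div_mul_eq_mul_div, div_le_div_iff₀ hDpos hdenpos]
    have h2 : 0 ≤ ((m : ℝ) - 1) * (1 - p) := by nlinarith
    have h3 : 0 ≤ (m : ℝ) * ((m : ℝ) - 1 - p * m) := by nlinarith
    nlinarith [mul_le_mul_of_nonneg_left hBα h2]
  · have hdenpos : 0 < (m : ℝ) + ((m : ℝ) - 1) * α := by nlinarith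
    rw [div_mul_eq_mul_div, div_lt_iff₀ hdenpos]
    nlinarith [mul_nonneg (sub_nonneg.mpr hm1) (mul_nonneg hα0.le hα0.le)]
end

section
/- Let X_1, …, X_m be mutually independent random variables taking values in {0,1}, let γ ∈ (0,1], and let π0 ∈ [0,1] be such that (1/m) Σ_{i=1}^{m} E(X_i) ≥ π0·γ. Define π̂0 := (Σ_{i=1}^{m} X_i)/(m·γ). Then for every ε > 0, P(π̂0 ≤ π0 − ε) ≤ 1/(4 m γ² ε²); in particular, P(π̂0 ≥ π0 − ε) → 1 as m → ∞. (This is a precise finite-sample form of the paper's Proposition 2: the QBF estimate π̂0 = Σ_i I(BF_i ≤ q_{i,γ})/(mγ) is an asymptotic upper bound for π0, since under a mixture with null proportion π0 the indicators I(BF_i ≤ q_{i,γ}) have average mean π0γ + (1−π0)·(1/m)Σ_i F_i^1(q_{i,γ}) ≥ π0γ.) -/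
open MeasureTheory ProbabilityTheory Filter
open scoped ENNReal NNReal

/-- **Proposition 2 (Wen, 2013), finite-sample form (QBF procedure).** For each `m`,
let `X_{m,1}, …, X_{m,m}` be mutually independent `{0,1}`-valued random variables
(the indicators `I(BF_i ≤ q_{i,γ})`), `γ ∈ (0,1]`, and `π₀ ∈ [0,1]` with
`(1/m) ∑ᵢ E(X_{m,i}) ≥ π₀ γ`. Then the QBF estimate `π̂₀ = (∑ᵢ X_{m,i})/(mγ)`
satisfies `P(π̂₀ ≤ π₀ − ε) ≤ 1/(4 m γ² ε²)` for every `ε > 0`; in particular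
`P(π̂₀ ≥ π₀ − ε) → 1` as `m → ∞`. -/
theorem qbf_estimate_asymptotic_upper_bound
    {Ω : Type*} [MeasurableSpace Ω] (P : Measure Ω) [IsProbabilityMeasure P]
    (γ : ℝ) (hγ0 : 0 < γ) (hγ1 : γ ≤ 1)
    (π₀ : ℝ) (hπ₀0 : 0 ≤ π₀) (hπ₀1 : π₀ ≤ 1)
    (X : (m : ℕ) → Fin m → Ω → ℝ)
    (hmeas : ∀ m i, Measurable (X m i))
    (h01 : ∀ m i ω, X m i ω = 0 ∨ X m i ω = 1)
    (hindep : ∀ m, iIndepFun (X m) P)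
    (hmean : ∀ m : ℕ, 1 ≤ m → π₀ * γ ≤ (1 / (m:ℝ)) * ∑ i, ∫ ω, X m i ω ∂P) :
    ∀ ε > (0:ℝ),
      (∀ m : ℕ, 1 ≤ m →
        (P {ω | (∑ i, X m i ω) / (m * γ) ≤ π₀ - ε}).toReal ≤
          1 / (4 * m * γ^2 * ε^2)) ∧
      Tendsto (fun m => P {ω | π₀ - ε ≤ (∑ i, X m i ω) / (m * γ)}) atTop (nhds 1) := by
  intro ε hε
  -- boundedness facts
  have hIcc : ∀ m i, ∀ᵐ ω ∂P, X m i ω ∈ Set.Icc (0:ℝ) 1 := by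
    intro m i
    filter_upwards with ω
    rcases h01 m i ω with h | h <;> simp [h]
  have hmem : ∀ m i, MemLp (X m i) 2 P := fun m i =>
    memLp_of_bounded (hIcc m i) (hmeas m i).aestronglyMeasurable 2
  -- key finite-sample bound, in ENNReal form
  have key : ∀ m : ℕ, 1 ≤ m →
      P {ω | (∑ i, X m i ω) / (m * γ) ≤ π₀ - ε} ≤
        ENNReal.ofReal (1 / (4 * m * γ^2 * ε^2)) := by
    intro m hm
    have hmpos : (0:ℝ) < m := by exact_mod_cast hm
    set S : Ω → ℝ := fun ω => ∑ i, X m i ω with hS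
    have hSeq : S = ∑ i, X m i := by
      ext ω; simp [hS]
    have hSmem : MemLp S 2 P := hSeq ▸ memLp_finsetSum' _ (fun i _ => hmem m i)
    have hVar : variance S P ≤ (m:ℝ) / 4 := by
      rw [hSeq, IndepFun.variance_sum (fun i _ => hmem m i)
        (fun i _ j _ hij => (hindep m).indepFun hij)]
      calc ∑ i : Fin m, variance (X m i) P
          ≤ ∑ _i : Fin m, (1/4 : ℝ) := by
            apply Finset.sum_le_sum
            intro i _
            have := variance_le_sq_of_bounded (hIcc m i) (hmeas m i).aemeasurable
            simpa using this.trans (by norm_num)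
        _ = (m:ℝ) / 4 := by simp; ring
    have hESlb : (m:ℝ) * γ * π₀ ≤ P[S] := by
      have h1 := hmean m hm
      have hES : P[S] = ∑ i, ∫ ω, X m i ω ∂P :=
        integral_finset_sum _ (fun i _ => (hmem m i).integrable one_le_two)
      rw [hES]
      have h2 := mul_le_mul_of_nonneg_left h1 hmpos.le
      have h3 : (m:ℝ) * ((1/(m:ℝ)) * ∑ i, ∫ ω, X m i ω ∂P) = ∑ i, ∫ ω, X m i ω ∂P := by
        field_simp
      rw [h3] at h2
      nlinarith [h2]
    have hc : (0:ℝ) < (m:ℝ) * γ * ε := by positivity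
    have cheb := meas_ge_le_variance_div_sq (μ := P) hSmem hc
    have hsub : {ω | (∑ i, X m i ω) / (m * γ) ≤ π₀ - ε} ⊆
        {ω | (m:ℝ) * γ * ε ≤ |S ω - P[S]|} := by
      intro ω hω
      simp only [Set.mem_setOf_eq] at hω ⊢
      have hmγ : (0:ℝ) < (m:ℝ) * γ := by positivity
      have h2 : S ω ≤ (π₀ - ε) * ((m:ℝ) * γ) := by
        rw [← div_le_iff₀ hmγ]; exact hω
      have h3 : S ω - P[S] ≤ -((m:ℝ) * γ * ε) := by nlinarith
      calc (m:ℝ) * γ * ε ≤ -(S ω - P[S]) := by linarith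
        _ ≤ |S ω - P[S]| := neg_le_abs _
    refine (measure_mono hsub).trans (cheb.trans (ENNReal.ofReal_le_ofReal ?_))
    rw [div_le_div_iff₀ (by positivity) (by positivity)]
    calc variance S P * (4 * m * γ^2 * ε^2)
        ≤ ((m:ℝ)/4) * (4 * m * γ^2 * ε^2) := by
          apply mul_le_mul_of_nonneg_right hVar (by positivity)
      _ = 1 * ((m:ℝ) * γ * ε)^2 := by ring
  constructor
  · intro m hm
    exact ENNReal.toReal_le_of_le_ofReal (by positivity) (key m hm)
  · -- lower bound: 1 - bound ≤ P(A) ≤ 1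
    have hub : ∀ m : ℕ, P {ω | π₀ - ε ≤ (∑ i, X m i ω) / (m * γ)} ≤ 1 :=
      fun m => prob_le_one
    have hlb : ∀ m : ℕ, 1 ≤ m →
        1 - ENNReal.ofReal (1 / (4 * m * γ^2 * ε^2)) ≤
          P {ω | π₀ - ε ≤ (∑ i, X m i ω) / (m * γ)} := by
      intro m hm
      rw [tsub_le_iff_right]
      calc (1:ℝ≥0∞) = P Set.univ := (measure_univ).symm
        _ ≤ P {ω | π₀ - ε ≤ (∑ i, X m i ω) / (m * γ)} +
            P {ω | (∑ i, X m i ω) / (m * γ) ≤ π₀ - ε} := by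
              refine le_trans (measure_mono ?_) (measure_union_le _ _)
              intro ω _
              exact (le_total (π₀ - ε) ((∑ i, X m i ω) / (m * γ))).imp id id
        _ ≤ P {ω | π₀ - ε ≤ (∑ i, X m i ω) / (m * γ)} +
            ENNReal.ofReal (1 / (4 * m * γ^2 * ε^2)) :=
              add_le_add_right (key m hm) _
    have hb0 : Tendsto (fun m : ℕ => ENNReal.ofReal (1 / (4 * m * γ^2 * ε^2)))
        atTop (nhds 0) := by
      have : Tendsto (fun m : ℕ => 1 / (4 * (m:ℝ) * γ^2 * ε^2)) atTop (nhds 0) := by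
        have h1 : Tendsto (fun m : ℕ => (4 * γ^2 * ε^2) * (m:ℝ)) atTop atTop :=
          (tendsto_natCast_atTop_atTop).const_mul_atTop (by positivity)
        have := h1.inv_tendsto_atTop
        refine this.congr (fun m => ?_)
        simp [one_div]
        ring_nf
      simpa using (ENNReal.tendsto_ofReal (a := 0) (by simpa using this)).comp
        (tendsto_id (α := ℕ)) |>.congr (fun m => rfl)
    have hlow : Tendsto (fun m : ℕ => 1 - ENNReal.ofReal (1 / (4 * m * γ^2 * ε^2)))
        atTop (nhds 1) := by
      have := ENNReal.Tendsto.sub (tendsto_const_nhds (x := (1:ℝ≥0∞))) hb0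
        (Or.inl ENNReal.one_ne_top)
      simpa using this
    refine tendsto_of_tendsto_of_tendsto_of_le_of_le' hlow tendsto_const_nhds ?_ ?_
    · filter_upwards [eventually_ge_atTop 1] with m hm using hlb m hm
    · filter_upwards with m using hub m
end
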